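/- Let X be a compact metric space equipped with a Borel probability measure m, let f : X → X be continuous, and let ε > 0. Suppose there exist pairwise disjoint open sets U_1, …, U_N with f(closure U_j) ⊆ U_j and m(U_j) < ε for every j, and m(U_1 ∪ … ∪ U_N) > 1 − ε. Then every Borel probability measure μ on X satisfies m(B(μ)) < 2ε; in particular, if ε ≤ 1/2 then f has no physical measure with basin of measure at least 2ε. -/

import Mathlib

open MeasureTheory Filter Topology ENNReal Function

noncomputable section

variable {X : Type*} [MetricSpace X] [CompactSpace X] [MeasurableSpace X] [BorelSpace X]

/-- The `n`-th Birkhoff average of the observable `φ` along the orbit of `x` under `f`. -/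
def birkhoffAvg (f : X → X) (φ : X → ℝ) (x : X) (n : ℕ) : ℝ :=
  (n : ℝ)⁻¹ * ∑ j ∈ Finset.range n, φ (f^[j] x)

/-- `μ` is the Birkhoff limit of the point `x` under `f`: the probability measures
`(1/n) ∑_{j<n} δ_{f^j x}` converge to `μ` in the weak* topology, i.e. the Birkhoff averages of
every continuous observable converge to the corresponding integral. -/
def IsBirkhoffLimit (f : X → X) (x : X) (μ : Measure X) : Prop :=
  IsProbabilityMeasure μ ∧
    ∀ φ : C(X, ℝ), Tendsto (birkhoffAvg f φ x) atTop (𝓝 (∫ y, φ y ∂μ))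

/-- The basin of a measure `μ`: the set of points whose Birkhoff limit exists and equals `μ`. -/
def basin (f : X → X) (μ : Measure X) : Set X := {x | IsBirkhoffLimit f x μ}

/-- Orbits of points in a trapping region stay in the region. -/
private lemma orbit_mem_of_trap {f : X → X} {U : Set X} (htrap : f '' closure U ⊆ U)
    {x : X} (hx : x ∈ U) : ∀ n, f^[n] x ∈ U := by
  intro n
  induction n with
  | zero => simpa
  | succ n ih =>
    rw [Function.iterate_succ_apply']
    exact htrap ⟨_, subset_closure ih, rfl⟩

/-- If the observable is constant `c` along the orbit from time `1` on, Birkhoff averages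
tend to `c`. -/
private lemma tendsto_birkhoffAvg_of_const {f : X → X} {φ : X → ℝ} {x : X} {c : ℝ}
    (h : ∀ n, 1 ≤ n → φ (f^[n] x) = c) :
    Tendsto (birkhoffAvg f φ x) atTop (𝓝 c) := by
  have heq : ∀ᶠ n in atTop, c + (φ x - c) / n = birkhoffAvg f φ x n := by
    filter_upwards [eventually_ge_atTop 1] with n hn
    obtain ⟨m, rfl⟩ := Nat.exists_eq_add_of_le hn
    have hsum : ∑ j ∈ Finset.range (1 + m), φ (f^[j] x) = φ x + m * c := by
      rw [add_comm 1 m, Finset.sum_range_succ']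
      simp only [Function.iterate_zero_apply]
      rw [Finset.sum_congr rfl fun i _ => h (i + 1) (Nat.le_add_left 1 i)]
      simp [add_comm]
    have hpos : (0 : ℝ) < (1 + m : ℕ) := by positivity
    rw [birkhoffAvg, hsum]
    field_simp
    push_cast
    ring
  have : Tendsto (fun n : ℕ => c + (φ x - c) / n) atTop (𝓝 (c + 0)) :=
    tendsto_const_nhds.add (tendsto_const_div_atTop_nhds_zero_nat _)
  rw [add_zero] at this
  exact this.congr' heq

/-- If a continuous map `f` of a compact metric space with a Borel probability measure `m`
admits pairwise disjoint open trapping regions `U 0, …, U (N-1)`, each of `m`-measure `< ε`,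
whose union has `m`-measure `> 1 - ε`, then every Borel probability measure has basin of
`m`-measure `< 2ε`; in particular, if `ε ≤ 1/2` then `f` has no physical measure whose basin
has measure at least `2ε`. -/
theorem basin_measure_lt_of_trapping_regions
    {f : X → X} (hf : Continuous f) (m : Measure X) (hm : IsProbabilityMeasure m)
    {ε : ℝ} (hε : 0 < ε) {N : ℕ} {U : Fin N → Set X}
    (hopen : ∀ j, IsOpen (U j)) (hdisj : Pairwise (Disjoint on U))
    (htrap : ∀ j, f '' closure (U j) ⊆ U j)
    (hsmall : ∀ j, m (U j) < ENNReal.ofReal ε)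
    (hbig : m (⋃ j, U j) > 1 - ENNReal.ofReal ε) :
    (∀ μ : Measure X, IsProbabilityMeasure μ → m (basin f μ) < ENNReal.ofReal (2 * ε)) ∧
      (ε ≤ 1 / 2 → ∀ μ : Measure X, IsProbabilityMeasure μ →
        ¬ ENNReal.ofReal (2 * ε) ≤ m (basin f μ)) := by
  -- the basin of a fixed μ can meet at most one trapping region
  have key : ∀ (μ : Measure X) (j k : Fin N), j ≠ k →
      (basin f μ ∩ U j).Nonempty → (basin f μ ∩ U k).Nonempty → False := by
    rintro μ j k hjk ⟨x, hxb, hxU⟩ ⟨y, hyb, hyU⟩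
    set Kj := f '' closure (U j) with hKjdef
    set Kk := f '' closure (U k) with hKkdef
    have hKjc : IsCompact Kj := (isClosed_closure.isCompact).image hf
    have hKkc : IsCompact Kk := (isClosed_closure.isCompact).image hf
    have hd : Disjoint Kj Kk := (hdisj hjk).mono (htrap j) (htrap k)
    obtain ⟨φ, hφj, hφk, _⟩ :=
      exists_continuous_zero_one_of_isClosed hKjc.isClosed hKkc.isClosed hd
    have hx1 : Tendsto (birkhoffAvg f φ x) atTop (𝓝 0) := by
      apply tendsto_birkhoffAvg_of_const
      intro n hn
      obtain ⟨p, rfl⟩ := Nat.exists_eq_add_of_le hn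
      have : f^[1 + p] x ∈ Kj := by
        rw [add_comm, Function.iterate_succ_apply']
        exact ⟨_, subset_closure (orbit_mem_of_trap (htrap j) hxU p), rfl⟩
      simpa using hφj this
    have hy1 : Tendsto (birkhoffAvg f φ y) atTop (𝓝 1) := by
      apply tendsto_birkhoffAvg_of_const
      intro n hn
      obtain ⟨p, rfl⟩ := Nat.exists_eq_add_of_le hn
      have : f^[1 + p] y ∈ Kk := by
        rw [add_comm, Function.iterate_succ_apply']
        exact ⟨_, subset_closure (orbit_mem_of_trap (htrap k) hyU p), rfl⟩
      simpa using hφk this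
    have e0 : (∫ z, φ z ∂μ) = 0 := tendsto_nhds_unique (hxb.2 φ) hx1
    have e1 : (∫ z, φ z ∂μ) = 1 := tendsto_nhds_unique (hyb.2 φ) hy1
    rw [e0] at e1
    exact zero_ne_one e1
  have hcompl : m ((⋃ j, U j)ᶜ) < ENNReal.ofReal ε := by
    have hmeas : MeasurableSet (⋃ j, U j) :=
      MeasurableSet.iUnion fun j => (hopen j).measurableSet
    rw [measure_compl hmeas (measure_ne_top m _), measure_univ]
    have h1 : (1 : ℝ≥0∞) < ENNReal.ofReal ε + m (⋃ j, U j) := by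
      calc (1 : ℝ≥0∞) ≤ (1 - ENNReal.ofReal ε) + ENNReal.ofReal ε := le_tsub_add
        _ < m (⋃ j, U j) + ENNReal.ofReal ε :=
          ENNReal.add_lt_add_right ENNReal.ofReal_ne_top hbig
        _ = ENNReal.ofReal ε + m (⋃ j, U j) := add_comm _ _
    exact ENNReal.sub_lt_of_lt_add prob_le_one h1
  have hεε : ENNReal.ofReal ε + ENNReal.ofReal ε = ENNReal.ofReal (2 * ε) := by
    rw [← ENNReal.ofReal_add hε.le hε.le]; ring_nf
  have main : ∀ μ : Measure X, IsProbabilityMeasure μ →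
      m (basin f μ) < ENNReal.ofReal (2 * ε) := by
    intro μ hμ
    by_cases hex : ∃ j, (basin f μ ∩ U j).Nonempty
    · obtain ⟨j0, hj0⟩ := hex
      have hsub : basin f μ ⊆ (⋃ j, U j)ᶜ ∪ U j0 := by
        intro z hz
        by_cases hzU : z ∈ ⋃ j, U j
        · obtain ⟨k, hk⟩ := Set.mem_iUnion.mp hzU
          rcases eq_or_ne k j0 with rfl | hne
          · exact Or.inr hk
          · exact absurd (key μ k j0 hne ⟨z, hz, hk⟩ hj0) not_false
        · exact Or.inl hzU
      calc m (basin f μ) ≤ m ((⋃ j, U j)ᶜ) + m (U j0) :=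
            le_trans (measure_mono hsub) (measure_union_le _ _)
        _ < ENNReal.ofReal ε + ENNReal.ofReal ε := ENNReal.add_lt_add hcompl (hsmall j0)
        _ = ENNReal.ofReal (2 * ε) := hεε
    · have hsub : basin f μ ⊆ (⋃ j, U j)ᶜ := by
        intro z hz
        intro hzU
        obtain ⟨k, hk⟩ := Set.mem_iUnion.mp hzU
        exact hex ⟨k, z, hz, hk⟩
      calc m (basin f μ) ≤ m ((⋃ j, U j)ᶜ) := measure_mono hsub
        _ < ENNReal.ofReal ε := hcompl
        _ ≤ ENNReal.ofReal (2 * ε) := ENNReal.ofReal_le_ofReal (by linarith)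
  exact ⟨main, fun _ μ hμ => not_le.mpr (main μ hμ)⟩

end
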